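/- arXiv:2205.10895 — 2 statements merged into one kernel-verified Lean document; each statement's English description precedes it below -/
import Mathlib

section
/- Let π₂ be a policy minimizing Ψ_α^2 over all policies, and suppose reg(π₂) > α. Then for every policy q: 2·(reg(q) − α) ≥ (reg(π₂) − α)·(1 + info(q)/info(π₂)); in particular 2·(reg(q) − α) ≥ reg(π₂) − α ≥ 0. -/
/-- A policy assigns to each context `s` a probability vector over the actions `A`. -/
structure Policy (S A : Type) [Fintype S] [Fintype A] where
  prob : S → A → ℝ
  nonneg : ∀ s a, 0 ≤ prob s a
  sum_eq_one : ∀ s, ∑ a, prob s a = 1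

/-- Expected one-step regret of a policy under context distribution `p`. -/
noncomputable def reg {S A : Type} [Fintype S] [Fintype A]
    (p : S → ℝ) (Δ : S → A → ℝ) (π : Policy S A) : ℝ :=
  ∑ s, p s * ∑ a, Δ s a * π.prob s a

/-- Expected information gain of a policy under context distribution `p`. -/
noncomputable def info {S A : Type} [Fintype S] [Fintype A]
    (p : S → ℝ) (I : S → A → ℝ) (π : Policy S A) : ℝ :=
  ∑ s, p s * ∑ a, I s a * π.prob s a

/-- The `(α, λ)`-marginal information ratio `Ψ_α^λ(π)`. -/
noncomputable def ratio {S A : Type} [Fintype S] [Fintype A]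
    (p : S → ℝ) (Δ I : S → A → ℝ) (α lam : ℝ) (π : Policy S A) : ℝ :=
  (max 0 (reg p Δ π - α)) ^ lam / info p I π

/-- The mixture of two policies. -/
noncomputable def Policy.mix {S A : Type} [Fintype S] [Fintype A]
    (π q : Policy S A) (t : ℝ) (ht0 : 0 ≤ t) (ht1 : t ≤ 1) : Policy S A where
  prob := fun s a => (1 - t) * π.prob s a + t * q.prob s a
  nonneg := fun s a => add_nonneg (mul_nonneg (by linarith) (π.nonneg s a))
    (mul_nonneg ht0 (q.nonneg s a))
  sum_eq_one := fun s => by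
    simp [Finset.sum_add_distrib, ← Finset.mul_sum, π.sum_eq_one s, q.sum_eq_one s]

lemma lin_aux {S A : Type} [Fintype S] [Fintype A]
    (p : S → ℝ) (f : S → A → ℝ) (x y : S → A → ℝ) (t : ℝ) :
    ∑ s, p s * ∑ a, f s a * ((1 - t) * x s a + t * y s a)
      = (1 - t) * (∑ s, p s * ∑ a, f s a * x s a)
        + t * (∑ s, p s * ∑ a, f s a * y s a) := by
  have inner : ∀ s, ∑ a, f s a * ((1 - t) * x s a + t * y s a)
      = (1 - t) * (∑ a, f s a * x s a) + t * (∑ a, f s a * y s a) := fun s => by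
    rw [Finset.mul_sum, Finset.mul_sum, ← Finset.sum_add_distrib]
    exact Finset.sum_congr rfl fun a _ => by ring
  simp only [inner]
  rw [Finset.mul_sum, Finset.mul_sum, ← Finset.sum_add_distrib]
  exact Finset.sum_congr rfl fun s _ => by ring

lemma reg_mix {S A : Type} [Fintype S] [Fintype A]
    (p : S → ℝ) (Δ : S → A → ℝ) (π q : Policy S A) (t : ℝ) (ht0 : 0 ≤ t) (ht1 : t ≤ 1) :
    reg p Δ (π.mix q t ht0 ht1) = (1 - t) * reg p Δ π + t * reg p Δ q :=
  lin_aux p Δ _ _ t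

lemma info_mix {S A : Type} [Fintype S] [Fintype A]
    (p : S → ℝ) (I : S → A → ℝ) (π q : Policy S A) (t : ℝ) (ht0 : 0 ≤ t) (ht1 : t ≤ 1) :
    info p I (π.mix q t ht0 ht1) = (1 - t) * info p I π + t * info p I q :=
  lin_aux p I _ _ t

lemma info_pos {S A : Type} [Fintype S] [Fintype A] [Nonempty A]
    (p : S → ℝ) (hp0 : ∀ s, 0 ≤ p s) (hpex : ∃ s, 0 < p s)
    (I : S → A → ℝ) (hI : ∀ s a, 0 < I s a) (π : Policy S A) :
    0 < info p I π := by
  obtain ⟨s₀, hs₀⟩ := hpex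
  have inner : ∀ s, 0 < ∑ a, I s a * π.prob s a := by
    intro s
    obtain ⟨a₀, _, ha₀⟩ := Finset.exists_ne_zero_of_sum_ne_zero
      (by rw [π.sum_eq_one s]; norm_num : ∑ a, π.prob s a ≠ 0)
    refine Finset.sum_pos' (fun a _ => mul_nonneg (hI s a).le (π.nonneg s a)) ?_
    exact ⟨a₀, Finset.mem_univ a₀,
      mul_pos (hI s a₀) (lt_of_le_of_ne (π.nonneg s a₀) (Ne.symm ha₀))⟩
  refine Finset.sum_pos' (fun s _ => mul_nonneg (hp0 s) (inner s).le) ?_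
  exact ⟨s₀, Finset.mem_univ s₀, mul_pos hs₀ (inner s₀)⟩

/-- First-order optimality consequence for a minimizer `π₂` of the squared marginal
information ratio: if `reg(π₂) > α` then for every policy `q`,
`2·(reg(q) − α) ≥ (reg(π₂) − α)·(1 + info(q)/info(π₂))`; in particular
`2·(reg(q) − α) ≥ reg(π₂) − α ≥ 0`. -/
theorem stmt_1 {S A : Type} [Fintype S] [Fintype A] [Nonempty S] [Nonempty A]
    (p : S → ℝ) (hp0 : ∀ s, 0 ≤ p s) (hp1 : ∑ s, p s = 1) (hpex : ∃ s, 0 < p s)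
    (Δ I : S → A → ℝ) (hΔ : ∀ s a, 0 ≤ Δ s a) (hI : ∀ s a, 0 < I s a)
    (α : ℝ) (hα : 0 ≤ α)
    (π₂ : Policy S A)
    (hmin : ∀ q : Policy S A, ratio p Δ I α 2 π₂ ≤ ratio p Δ I α 2 q)
    (hreg : α < reg p Δ π₂) :
    ∀ q : Policy S A,
      (reg p Δ π₂ - α) * (1 + info p I q / info p I π₂) ≤ 2 * (reg p Δ q - α) ∧
      reg p Δ π₂ - α ≤ 2 * (reg p Δ q - α) ∧
      0 ≤ reg p Δ π₂ - α := by
  intro q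
  set R0 := reg p Δ π₂ with hR0
  set N0 := info p I π₂ with hN0
  set Rq := reg p Δ q with hRq
  set Nq := info p I q with hNq
  have hN0pos : 0 < N0 := info_pos p hp0 hpex I hI π₂
  have hNqpos : 0 < Nq := info_pos p hp0 hpex I hI q
  have hr : 0 < R0 - α := by linarith
  have hratπ₂ : ratio p Δ I α 2 π₂ = (R0 - α) ^ (2:ℝ) / N0 := by
    rw [ratio, max_eq_right hr.le]
  -- key inequality at parameter t
  have key : ∀ t : ℝ, 0 ≤ t → t ≤ 1 →
      (R0 - α) ^ 2 * ((1 - t) * N0 + t * Nq)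
        ≤ ((1 - t) * R0 + t * Rq - α) ^ 2 * N0 ∧
      0 < (1 - t) * R0 + t * Rq - α := by
    intro t ht0 ht1
    have hm := hmin (π₂.mix q t ht0 ht1)
    rw [hratπ₂, ratio, reg_mix, info_mix] at hm
    have hNt : 0 < (1 - t) * N0 + t * Nq := by
      rcases eq_or_lt_of_le ht1 with h | h
      · subst h; simpa using hNqpos
      · have := mul_pos (by linarith : (0:ℝ) < 1 - t) hN0pos
        nlinarith [mul_nonneg ht0 hNqpos.le]
    have hpos : 0 < (1 - t) * R0 + t * Rq - α := by
      by_contra h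
      push_neg at h
      rw [max_eq_left (by linarith)] at hm
      have h2 : ((0:ℝ)) ^ (2:ℝ) = 0 := by
        rw [Real.rpow_two]; ring
      rw [h2, zero_div] at hm
      have : 0 < (R0 - α) ^ (2:ℝ) / N0 := by
        apply div_pos _ hN0pos
        rw [Real.rpow_two]; positivity
      linarith
    rw [max_eq_right hpos.le] at hm
    rw [div_le_div_iff₀ hN0pos hNt, Real.rpow_two, Real.rpow_two] at hm
    exact ⟨hm, hpos⟩
  -- derive first-order condition: (R0 - α) * (Nq - N0) ≤ 2 * N0 * (Rq - R0)
  have step : (R0 - α) * (Nq - N0) ≤ 2 * N0 * (Rq - R0) := by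
    set c : ℝ := 2 * N0 * (Rq - R0) - (R0 - α) * (Nq - N0) with hc
    set K : ℝ := N0 * (Rq - R0) ^ 2 with hK
    have hK0 : 0 ≤ K := by positivity
    have hstep : ∀ t : ℝ, 0 < t → t ≤ 1 → 0 ≤ (R0 - α) * c + t * K := by
      intro t ht0 ht1
      have h1 := (key t ht0.le ht1).1
      have hid : t * ((R0 - α) * c + t * K)
          = ((1 - t) * R0 + t * Rq - α) ^ 2 * N0
            - (R0 - α) ^ 2 * ((1 - t) * N0 + t * Nq) := by rw [hc, hK]; ring
      have h2 : 0 ≤ t * ((R0 - α) * c + t * K) := by rw [hid]; linarith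
      by_contra h'
      push_neg at h'
      nlinarith [mul_neg_of_pos_of_neg ht0 h']
    by_contra h
    push_neg at h
    have hc0 : c < 0 := by linarith
    have hrc : 0 < -((R0 - α) * c) := by nlinarith
    have ht' : (0:ℝ) < -((R0 - α) * c) / (K + 1) := by positivity
    set t := min 1 (-((R0 - α) * c) / (K + 1)) with htdef
    have htpos : 0 < t := lt_min one_pos ht'
    have ht1 : t ≤ 1 := min_le_left _ _
    have h2 := hstep t htpos ht1
    have htK : t * K < -((R0 - α) * c) := by
      calc t * K ≤ (-((R0 - α) * c) / (K + 1)) * K :=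
              mul_le_mul_of_nonneg_right (min_le_right _ _) hK0
        _ < -((R0 - α) * c) := by
              rw [div_mul_eq_mul_div, div_lt_iff₀ (by linarith : (0:ℝ) < K + 1)]
              nlinarith
    linarith
  have hRqpos : 0 < Rq - α := by
    have := (key 1 zero_le_one le_rfl).2
    simpa using this
  have main : (R0 - α) * (1 + Nq / N0) ≤ 2 * (Rq - α) := by
    have h2 : (R0 - α) * (N0 + Nq) ≤ 2 * (Rq - α) * N0 := by nlinarith [step]
    have h3 : (R0 - α) * (1 + Nq / N0) = (R0 - α) * (N0 + Nq) / N0 := by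
      field_simp
    rw [h3, div_le_iff₀ hN0pos]
    exact h2
  refine ⟨main, ?_, hr.le⟩
  have h4 : (R0 - α) * 1 ≤ (R0 - α) * (1 + Nq / N0) := by
    apply mul_le_mul_of_nonneg_left _ hr.le
    have : 0 < Nq / N0 := div_pos hNqpos hN0pos
    linarith
  linarith [main]
end

section
/- Let d ≥ 1 and work in ℝ^{d+1}. Let H = { x ∈ ℝ^{d+1} : x_j ∈ {−1,1} for all j ∈ {1,…,d} and x_{d+1} = 1 }, let the context-1 action (feature) set be {0} ∪ H where 0 is the zero vector, and let the context-2 action (feature) set B be any nonempty finite set of vectors in ℝ^{d+1} whose (d+1)-th coordinate equals 0. Suppose each of the two contexts arrives with probability 1/2, and for a policy π (assigning to context m ∈ {1,2} a probability distribution π(m) on that context's feature set) let M(π) = (1/2)·E_{x∼π(1)}[x xᵀ] + (1/2)·E_{x∼π(2)}[x xᵀ]. Then: (a) for every policy π, the minimum eigenvalue of M(π) is at most 1/2 (witnessed by the unit vector e_{d+1}); and (b) the policy with π(1) uniform on H (and π(2) arbitrary) satisfies vᵀ M(π) v ≥ (1/2)‖v‖² for all v ∈ ℝ^{d+1}, so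 its minimum eigenvalue is at least 1/2. Hence the explorability constant max_π σ_min(M(π)) equals 1/2. -/
open Matrix

/-- The smallest value of the Rayleigh quotient `vᵀ M v` over unit vectors; for a real
symmetric matrix this is the minimum eigenvalue `σ_min(M)`. -/
noncomputable def minEig {n : ℕ} (M : Matrix (Fin n) (Fin n) ℝ) : ℝ :=
  sInf { r : ℝ | ∃ v : Fin n → ℝ, (∑ i, v i ^ 2) = 1 ∧ r = v ⬝ᵥ M.mulVec v }

/-- The informative action set
`H = { x ∈ ℝ^{d+1} : x_j ∈ {−1,1} for j ∈ {1,…,d}, x_{d+1} = 1 }`. -/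
noncomputable def Hset (d : ℕ) : Finset (Fin (d + 1) → ℝ) :=
  Fintype.piFinset fun j => if (j : ℕ) < d then ({-1, 1} : Finset ℝ) else ({1} : Finset ℝ)

/-- `p` is a probability distribution supported on the finite set `s`. -/
def IsDistOn {α : Type} (s : Finset α) (p : α → ℝ) : Prop :=
  (∀ x, 0 ≤ p x) ∧ (∑ x ∈ s, p x = 1) ∧ ∀ x ∉ s, p x = 0

/-- Expected outer-product matrix of a policy over the two equiprobable contexts:
context 1 has feature set `{0} ∪ H`, context 2 has feature set `B`. -/
noncomputable def covMat (d : ℕ) (B : Finset (Fin (d + 1) → ℝ))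
    (p1 p2 : (Fin (d + 1) → ℝ) → ℝ) : Matrix (Fin (d + 1)) (Fin (d + 1)) ℝ :=
  (1 / 2 : ℝ) • (∑ x ∈ insert 0 (Hset d), p1 x • vecMulVec x x) +
  (1 / 2 : ℝ) • (∑ x ∈ B, p2 x • vecMulVec x x)

/- ### Auxiliary lemmas -/

lemma qf_single {n : ℕ} (x v : Fin n → ℝ) :
    v ⬝ᵥ (vecMulVec x x).mulVec v = (x ⬝ᵥ v)^2 := by
  have : (vecMulVec x x).mulVec v = (x ⬝ᵥ v) • x := by
    ext i
    simp [vecMulVec_apply, mulVec, dotProduct, Finset.mul_sum, mul_comm, mul_left_comm]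
  rw [this]
  simp [dotProduct_smul, dotProduct_comm, sq, smul_eq_mul]

lemma qf_sum {n : ℕ} (s : Finset (Fin n → ℝ)) (p : (Fin n → ℝ) → ℝ) (v : Fin n → ℝ) :
    v ⬝ᵥ (∑ x ∈ s, p x • vecMulVec x x).mulVec v = ∑ x ∈ s, p x * (x ⬝ᵥ v)^2 := by
  induction s using Finset.induction_on with
  | empty => simp
  | insert _ _ h ih =>
    rw [Finset.sum_insert h, Finset.sum_insert h, Matrix.add_mulVec, dotProduct_add,
      Matrix.smul_mulVec, dotProduct_smul, smul_eq_mul, qf_single, ih]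

lemma covMat_qf (d : ℕ) (B : Finset (Fin (d + 1) → ℝ))
    (p1 p2 : (Fin (d + 1) → ℝ) → ℝ) (v : Fin (d + 1) → ℝ) :
    v ⬝ᵥ (covMat d B p1 p2).mulVec v =
      (1/2 : ℝ) * ∑ x ∈ insert 0 (Hset d), p1 x * (x ⬝ᵥ v)^2 +
      (1/2 : ℝ) * ∑ x ∈ B, p2 x * (x ⬝ᵥ v)^2 := by
  rw [covMat, Matrix.add_mulVec, dotProduct_add, Matrix.smul_mulVec,
    Matrix.smul_mulVec, dotProduct_smul, dotProduct_smul, qf_sum, qf_sum,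
    smul_eq_mul, smul_eq_mul]

lemma covMat_qf_nonneg (d : ℕ) (B : Finset (Fin (d + 1) → ℝ))
    {p1 p2 : (Fin (d + 1) → ℝ) → ℝ} (h1 : ∀ x, 0 ≤ p1 x) (h2 : ∀ x, 0 ≤ p2 x)
    (v : Fin (d + 1) → ℝ) :
    0 ≤ v ⬝ᵥ (covMat d B p1 p2).mulVec v := by
  rw [covMat_qf]
  have A : (0:ℝ) ≤ ∑ x ∈ insert 0 (Hset d), p1 x * (x ⬝ᵥ v)^2 :=
    Finset.sum_nonneg fun x _ => mul_nonneg (h1 x) (sq_nonneg _)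
  have Bn : (0:ℝ) ≤ ∑ x ∈ B, p2 x * (x ⬝ᵥ v)^2 :=
    Finset.sum_nonneg fun x _ => mul_nonneg (h2 x) (sq_nonneg _)
  nlinarith

lemma Hset_last {d : ℕ} {x : Fin (d+1) → ℝ} (hx : x ∈ Hset d) : x (Fin.last d) = 1 := by
  rw [Hset, Fintype.mem_piFinset] at hx
  have := hx (Fin.last d)
  simpa using this

lemma Hset_sq {d : ℕ} {x : Fin (d+1) → ℝ} (hx : x ∈ Hset d) (i : Fin (d+1)) :
    x i * x i = 1 := by
  rw [Hset, Fintype.mem_piFinset] at hx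
  have := hx i
  by_cases h : (i:ℕ) < d
  · rw [if_pos h] at this
    rcases Finset.mem_insert.1 this with h1 | h1 <;> simp_all
  · rw [if_neg h] at this; simp_all

lemma one_mem_Hset {d : ℕ} : (fun _ => (1:ℝ)) ∈ Hset d := by
  rw [Hset, Fintype.mem_piFinset]
  intro j
  by_cases h : (j:ℕ) < d <;> simp [h]

lemma zero_not_mem_Hset {d : ℕ} : (0 : Fin (d+1) → ℝ) ∉ Hset d := by
  intro h
  have := Hset_last h
  simp at this

lemma Hset_card_pos {d : ℕ} : 0 < ((Hset d).card : ℝ) := by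
  have : (Hset d).Nonempty := ⟨_, one_mem_Hset⟩
  exact_mod_cast Finset.card_pos.2 this

lemma Hset_cross {d : ℕ} {i j : Fin (d+1)} (hij : i ≠ j) :
    ∑ x ∈ Hset d, x i * x j = 0 := by
  set f : Fin (d+1) → ℝ → ℝ := fun k y => if k = i then y else if k = j then y else 1 with hf
  have key : ∀ x : Fin (d+1) → ℝ, x i * x j = ∏ k, f k (x k) := by
    intro x
    have hsub : ({i, j} : Finset (Fin (d+1))) ⊆ Finset.univ := Finset.subset_univ _
    rw [← Finset.prod_subset hsub (by
      intro k _ hk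
      simp only [Finset.mem_insert, Finset.mem_singleton, not_or] at hk
      simp [hf, hk.1, hk.2])]
    rw [Finset.prod_pair hij]
    simp [hf, hij, hij.symm]
  simp_rw [key]
  rw [Hset, ← Finset.prod_univ_sum]
  obtain ⟨i0, hi0mem, hi0⟩ : ∃ i0, (i0 = i ∨ i0 = j) ∧ i0 ≠ Fin.last d := by
    by_cases h : i = Fin.last d
    · exact ⟨j, Or.inr rfl, fun hj => hij (h.trans hj.symm)⟩
    · exact ⟨i, Or.inl rfl, h⟩
  apply Finset.prod_eq_zero (Finset.mem_univ i0)
  have hlt : (i0 : ℕ) < d := by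
    have := Fin.val_lt_last hi0
    simpa using this
  rw [if_pos hlt]
  have hfy : ∀ y : ℝ, f i0 y = y := by
    intro y
    rcases hi0mem with h | h
    · simp [hf, h]
    · by_cases h' : i0 = i
      · simp [hf, h']
      · simp [hf, h', h]
  rw [Finset.sum_congr rfl (fun y _ => hfy y)]
  norm_num

lemma Hset_diag {d : ℕ} (i : Fin (d+1)) :
    ∑ x ∈ Hset d, x i * x i = ((Hset d).card : ℝ) := by
  rw [Finset.sum_congr rfl (fun x hx => Hset_sq hx i)]
  simp

lemma Hset_dot_sq {d : ℕ} (v : Fin (d+1) → ℝ) :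
    ∑ x ∈ Hset d, (x ⬝ᵥ v)^2 = ((Hset d).card : ℝ) * ∑ i, v i ^ 2 := by
  have expand : ∀ x : Fin (d+1) → ℝ,
      (x ⬝ᵥ v)^2 = ∑ i, ∑ j, (x i * x j) * (v i * v j) := by
    intro x
    rw [dotProduct, sq, Finset.sum_mul_sum]
    congr 1; ext i; congr 1; ext j; ring
  simp_rw [expand]
  rw [Finset.sum_comm]
  have key : ∀ i : Fin (d+1), ∑ x ∈ Hset d, ∑ j, (x i * x j) * (v i * v j)
      = ((Hset d).card : ℝ) * v i ^ 2 := by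
    intro i
    rw [Finset.sum_comm]
    rw [Finset.sum_eq_single i]
    · rw [← Finset.sum_mul, Hset_diag]; ring
    · intro j _ hj
      rw [← Finset.sum_mul, Hset_cross (Ne.symm hj), zero_mul]
    · intro h; exact absurd (Finset.mem_univ i) h
  rw [Finset.sum_congr rfl (fun i _ => key i), ← Finset.mul_sum]

lemma single_unit {d : ℕ} :
    (∑ i : Fin (d+1), (Pi.single (Fin.last d) (1:ℝ) : Fin (d+1) → ℝ) i ^ 2) = 1 := by
  rw [Finset.sum_eq_single (Fin.last d)]
  · simp
  · intro j _ hj; simp [Pi.single_apply, hj]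
  · intro h; exact absurd (Finset.mem_univ _) h

lemma dot_single {d : ℕ} (x : Fin (d+1) → ℝ) :
    x ⬝ᵥ (Pi.single (Fin.last d) (1:ℝ)) = x (Fin.last d) := by
  rw [dotProduct, Finset.sum_eq_single (Fin.last d)]
  · simp
  · intro j _ hj; simp [Pi.single_apply, hj]
  · intro h; exact absurd (Finset.mem_univ _) h

/-- uniform distribution on `Hset d` is a distribution on `insert 0 (Hset d)`. -/
lemma uniform_H_dist (d : ℕ) :
    IsDistOn (insert 0 (Hset d))
      (fun x => if x ∈ Hset d then (1 / ((Hset d).card : ℝ)) else 0) := by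
  refine ⟨fun x => ?_, ?_, fun x hx => ?_⟩
  · show 0 ≤ if x ∈ Hset d then (1 / ((Hset d).card : ℝ)) else 0
    by_cases h : x ∈ Hset d
    · rw [if_pos h]; positivity
    · rw [if_neg h]
  · have h0 : ((Hset d).card : ℝ) ≠ 0 := ne_of_gt Hset_card_pos
    rw [Finset.sum_insert zero_not_mem_Hset, if_neg zero_not_mem_Hset,
      Finset.sum_congr rfl (fun x hx => if_pos hx), Finset.sum_const, nsmul_eq_mul]
    field_simp
    norm_num
  · have : x ∉ Hset d := fun h => hx (Finset.mem_insert_of_mem h)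
    simp [this]

/- ### Main theorem -/

/-- Verification, inside the proof of Theorem 6.1, that the constructed two-context
sparse linear contextual bandit instance has explorability constant exactly `1/2`:
(a) every policy has `σ_min(M(π)) ≤ 1/2`, witnessed by the unit vector `e_{d+1}`;
(b) the policy uniform on `H` in context 1 satisfies `vᵀ M v ≥ ‖v‖²/2` for all `v`, so
`σ_min ≥ 1/2`; (c) hence `max_π σ_min(M(π)) = 1/2`. -/
theorem stmt_9 (d : ℕ) (hd : 1 ≤ d)
    (B : Finset (Fin (d + 1) → ℝ)) (hBne : B.Nonempty)
    (hB : ∀ x ∈ B, x (Fin.last d) = 0) :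
    (∀ p1 p2 : (Fin (d + 1) → ℝ) → ℝ,
      IsDistOn (insert 0 (Hset d)) p1 → IsDistOn B p2 →
        (Pi.single (Fin.last d) (1 : ℝ)) ⬝ᵥ
            (covMat d B p1 p2).mulVec (Pi.single (Fin.last d) (1 : ℝ)) ≤ 1 / 2 ∧
        minEig (covMat d B p1 p2) ≤ 1 / 2) ∧
    (∀ p2 : (Fin (d + 1) → ℝ) → ℝ, IsDistOn B p2 →
      (∀ v : Fin (d + 1) → ℝ,
        (1 / 2 : ℝ) * ∑ i, v i ^ 2 ≤
          v ⬝ᵥ (covMat d B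
            (fun x => if x ∈ Hset d then (1 / ((Hset d).card : ℝ)) else 0) p2).mulVec v) ∧
      (1 / 2 : ℝ) ≤ minEig (covMat d B
            (fun x => if x ∈ Hset d then (1 / ((Hset d).card : ℝ)) else 0) p2)) ∧
    sSup { r : ℝ | ∃ p1 p2 : (Fin (d + 1) → ℝ) → ℝ,
        IsDistOn (insert 0 (Hset d)) p1 ∧ IsDistOn B p2 ∧
        r = minEig (covMat d B p1 p2) } = 1 / 2 := by
  -- part (a)
  have parta : ∀ p1 p2 : (Fin (d + 1) → ℝ) → ℝ,
      IsDistOn (insert 0 (Hset d)) p1 → IsDistOn B p2 →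
        (Pi.single (Fin.last d) (1 : ℝ)) ⬝ᵥ
            (covMat d B p1 p2).mulVec (Pi.single (Fin.last d) (1 : ℝ)) ≤ 1 / 2 ∧
        minEig (covMat d B p1 p2) ≤ 1 / 2 := by
    intro p1 p2 hp1 hp2
    obtain ⟨h1n, h1s, h1z⟩ := hp1
    obtain ⟨h2n, h2s, h2z⟩ := hp2
    have hqf : (Pi.single (Fin.last d) (1 : ℝ)) ⬝ᵥ
        (covMat d B p1 p2).mulVec (Pi.single (Fin.last d) (1 : ℝ)) ≤ 1 / 2 := by
      rw [covMat_qf]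
      have hBzero : ∑ x ∈ B, p2 x * (x ⬝ᵥ (Pi.single (Fin.last d) (1:ℝ)))^2 = 0 := by
        apply Finset.sum_eq_zero
        intro x hx
        rw [dot_single, hB x hx]
        ring
      have hHle : ∑ x ∈ insert 0 (Hset d),
          p1 x * (x ⬝ᵥ (Pi.single (Fin.last d) (1:ℝ)))^2 ≤ 1 := by
        calc ∑ x ∈ insert 0 (Hset d), p1 x * (x ⬝ᵥ (Pi.single (Fin.last d) (1:ℝ)))^2
            ≤ ∑ x ∈ insert 0 (Hset d), p1 x := by
              apply Finset.sum_le_sum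
              intro x hx
              rw [dot_single]
              rcases Finset.mem_insert.1 hx with h | h
              · subst h; simpa using h1n 0
              · rw [Hset_last h]; simp
          _ = 1 := h1s
      rw [hBzero]
      linarith
    refine ⟨hqf, ?_⟩
    have hmem : (Pi.single (Fin.last d) (1 : ℝ)) ⬝ᵥ
        (covMat d B p1 p2).mulVec (Pi.single (Fin.last d) (1 : ℝ)) ∈
        { r : ℝ | ∃ v : Fin (d+1) → ℝ, (∑ i, v i ^ 2) = 1 ∧
          r = v ⬝ᵥ (covMat d B p1 p2).mulVec v } :=
      ⟨_, single_unit, rfl⟩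
    have hbdd : BddBelow { r : ℝ | ∃ v : Fin (d+1) → ℝ, (∑ i, v i ^ 2) = 1 ∧
        r = v ⬝ᵥ (covMat d B p1 p2).mulVec v } := by
      refine ⟨0, fun r hr => ?_⟩
      obtain ⟨v, _, rfl⟩ := hr
      exact covMat_qf_nonneg d B h1n h2n v
    exact le_trans (csInf_le hbdd hmem) hqf
  -- part (b)
  have partb : ∀ p2 : (Fin (d + 1) → ℝ) → ℝ, IsDistOn B p2 →
      (∀ v : Fin (d + 1) → ℝ,
        (1 / 2 : ℝ) * ∑ i, v i ^ 2 ≤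
          v ⬝ᵥ (covMat d B
            (fun x => if x ∈ Hset d then (1 / ((Hset d).card : ℝ)) else 0) p2).mulVec v) ∧
      (1 / 2 : ℝ) ≤ minEig (covMat d B
            (fun x => if x ∈ Hset d then (1 / ((Hset d).card : ℝ)) else 0) p2) := by
    intro p2 hp2
    obtain ⟨h2n, h2s, h2z⟩ := hp2
    have hv : ∀ v : Fin (d + 1) → ℝ,
        (1 / 2 : ℝ) * ∑ i, v i ^ 2 ≤
          v ⬝ᵥ (covMat d B
            (fun x => if x ∈ Hset d then (1 / ((Hset d).card : ℝ)) else 0) p2).mulVec v := by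
      intro v
      rw [covMat_qf]
      have hfirst : ∑ x ∈ insert 0 (Hset d),
          (if x ∈ Hset d then (1 / ((Hset d).card : ℝ)) else 0) * (x ⬝ᵥ v)^2
          = ∑ i, v i ^ 2 := by
        have h0 : ((Hset d).card : ℝ) ≠ 0 := ne_of_gt Hset_card_pos
        rw [Finset.sum_insert zero_not_mem_Hset, if_neg zero_not_mem_Hset, zero_mul,
          zero_add, Finset.sum_congr rfl (fun x hx => by rw [if_pos hx]),
          ← Finset.mul_sum, Hset_dot_sq]
        field_simp
      have hsecond : (0:ℝ) ≤ ∑ x ∈ B, p2 x * (x ⬝ᵥ v)^2 :=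
        Finset.sum_nonneg fun x _ => mul_nonneg (h2n x) (sq_nonneg _)
      rw [hfirst]
      linarith
    refine ⟨hv, ?_⟩
    apply le_csInf
    · exact ⟨_, _, single_unit, rfl⟩
    · rintro r ⟨v, hvunit, rfl⟩
      have := hv v
      rw [hvunit] at this
      linarith
  refine ⟨parta, partb, ?_⟩
  -- part (c)
  set p1u : (Fin (d + 1) → ℝ) → ℝ :=
    fun x => if x ∈ Hset d then (1 / ((Hset d).card : ℝ)) else 0 with hp1u
  set p2u : (Fin (d + 1) → ℝ) → ℝ :=
    fun x => if x ∈ B then (1 / (B.card : ℝ)) else 0 with hp2u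
  have hBcard : 0 < (B.card : ℝ) := by exact_mod_cast Finset.card_pos.2 hBne
  have hp2dist : IsDistOn B p2u := by
    refine ⟨fun x => ?_, ?_, fun x hx => ?_⟩
    · show 0 ≤ if x ∈ B then (1 / (B.card : ℝ)) else 0
      by_cases h : x ∈ B
      · rw [if_pos h]; positivity
      · rw [if_neg h]
    · have h0 : (B.card : ℝ) ≠ 0 := ne_of_gt hBcard
      show (∑ x ∈ B, if x ∈ B then (1 / (B.card : ℝ)) else 0) = 1
      rw [Finset.sum_congr rfl (fun x hx => if_pos hx), Finset.sum_const, nsmul_eq_mul]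
      field_simp
    · show (if x ∈ B then (1 / (B.card : ℝ)) else 0) = 0
      rw [if_neg hx]
  have hp1dist := uniform_H_dist d
  have heq : minEig (covMat d B p1u p2u) = 1 / 2 :=
    le_antisymm ((parta p1u p2u hp1dist hp2dist).2) ((partb p2u hp2dist).2)
  apply le_antisymm
  · apply csSup_le
    · exact ⟨_, p1u, p2u, hp1dist, hp2dist, rfl⟩
    · rintro r ⟨p1, p2, hp1, hp2, rfl⟩
      exact (parta p1 p2 hp1 hp2).2
  · apply le_csSup
    · refine ⟨1/2, ?_⟩
      rintro r ⟨p1, p2, hp1, hp2, rfl⟩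
      exact (parta p1 p2 hp1 hp2).2
    · exact ⟨p1u, p2u, hp1dist, hp2dist, heq.symm⟩
end
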